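/- Let X be a real n×p matrix whose columns are linearly independent, Y ∈ ℝⁿ, λ ≥ 0, let C be a p×p real diagonal matrix with diagonal entries in {−1, 0, 1}, set S := C Xᵀ X C, let S⁻ satisfy the four Penrose equations for S with S S⁻ = S⁻ S = C², and put û := S⁻ (C Xᵀ Y − λ C² 𝟙). Then û is a global minimizer of the orthant lasso criterion: L_C(û) ≤ L_C(u) for every u ∈ ℝᵖ, where L_C(u) = ½ Yᵀ Y − uᵀ C Xᵀ Y + ½ uᵀ C Xᵀ X C u + λ uᵀ C² 𝟙. -/
import Mathlib


open Matrix BigOperators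

/-- `B` is a Moore–Penrose generalized inverse of `A`:
the four Penrose equations hold. -/
def IsMoorePenrose {p : ℕ} (A B : Matrix (Fin p) (Fin p) ℝ) : Prop :=
  A * B * A = A ∧ B * A * B = B ∧ (A * B)ᵀ = A * B ∧ (B * A)ᵀ = B * A

theorem orthant_lasso_global_minimizer {n p : ℕ}
    (X : Matrix (Fin n) (Fin p) ℝ)
    (hX : LinearIndependent ℝ (fun j : Fin p => fun i : Fin n => X i j))
    (Y : Fin n → ℝ) (lam : ℝ) (hlam : 0 ≤ lam)
    (C : Matrix (Fin p) (Fin p) ℝ) (hdiag : C.IsDiag)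
    (hent : ∀ i, C i i = -1 ∨ C i i = 0 ∨ C i i = 1)
    (Sinv : Matrix (Fin p) (Fin p) ℝ)
    (hMP : IsMoorePenrose (C * Xᵀ * X * C) Sinv)
    (hleft : (C * Xᵀ * X * C) * Sinv = C * C)
    (hright : Sinv * (C * Xᵀ * X * C) = C * C)
    (LC : (Fin p → ℝ) → ℝ)
    (hLC : ∀ u, LC u = (1 / 2) * (Y ⬝ᵥ Y) - u ⬝ᵥ ((C * Xᵀ).mulVec Y)
        + (1 / 2) * (u ⬝ᵥ (C * Xᵀ * X * C).mulVec u)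
        + lam * (u ⬝ᵥ (C * C).mulVec (fun _ => (1 : ℝ)))) :
    ∀ u : Fin p → ℝ,
      LC (Sinv.mulVec ((C * Xᵀ).mulVec Y - lam • (C * C).mulVec (fun _ => (1 : ℝ))))
        ≤ LC u := by
  intro u
  set S : Matrix (Fin p) (Fin p) ℝ := C * Xᵀ * X * C with hS
  -- C is symmetric
  have hCsymm : Cᵀ = C := by
    ext i j
    by_cases h : i = j
    · simp [h]
    · rw [Matrix.transpose_apply, hdiag (Ne.symm h), hdiag h]
  -- C equals diagonal of its diagonal
  have hCd : Matrix.diagonal (fun i => C i i) = C := hdiag.diagonal_diag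
  -- C³ = C
  have hC3 : C * C * C = C := by
    rw [← hCd, Matrix.diagonal_mul_diagonal, Matrix.diagonal_mul_diagonal]
    ext i j
    by_cases hij : i = j
    · subst hij
      simp only [Matrix.diagonal_apply_eq]
      rcases hent i with h | h | h <;> rw [h] <;> ring
    · simp [Matrix.diagonal_apply_ne _ hij]
  have hC4 : C * C * (C * C) = C * C := by
    rw [← mul_assoc, hC3]
  -- S is symmetric
  have hSsymm : Sᵀ = S := by
    rw [hS]
    simp [Matrix.transpose_mul, hCsymm, Matrix.mul_assoc]
  set b : Fin p → ℝ := (C * Xᵀ).mulVec Y - lam • (C * C).mulVec (fun _ => (1 : ℝ)) with hb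
  set uh : Fin p → ℝ := Sinv.mulVec b with huh
  -- S û = b
  have hCCb : (C * C).mulVec b = b := by
    rw [hb]
    rw [Matrix.mulVec_sub, Matrix.mulVec_smul, Matrix.mulVec_mulVec, Matrix.mulVec_mulVec,
      show C * C * (C * Xᵀ) = C * C * C * Xᵀ by rw [← Matrix.mul_assoc], hC3, hC4]
  have hSb : S.mulVec uh = b := by
    rw [huh, Matrix.mulVec_mulVec, hleft, hCCb]
  -- symmetry of the bilinear form
  have hsym : ∀ v w : Fin p → ℝ, v ⬝ᵥ S.mulVec w = w ⬝ᵥ S.mulVec v := by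
    intro v w
    rw [Matrix.dotProduct_mulVec, ← Matrix.mulVec_transpose, hSsymm, dotProduct_comm]
  -- rewrite LC
  have key : ∀ w : Fin p → ℝ, LC w
      = (1 / 2) * (Y ⬝ᵥ Y) - w ⬝ᵥ b + (1 / 2) * (w ⬝ᵥ S.mulVec w) := by
    intro w
    rw [hLC, hb]
    rw [dotProduct_sub, dotProduct_smul]
    simp only [smul_eq_mul]
    ring
  rw [key, key]
  set v : Fin p → ℝ := u - uh with hv
  have hu : u = uh + v := by rw [hv]; ring
  have hexp : u ⬝ᵥ S.mulVec u
      = uh ⬝ᵥ S.mulVec uh + 2 * (v ⬝ᵥ b) + v ⬝ᵥ S.mulVec v := by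
    rw [hu, Matrix.mulVec_add, add_dotProduct, dotProduct_add,
      dotProduct_add, hsym uh v, hSb]
    ring
  have hub : u ⬝ᵥ b = uh ⬝ᵥ b + v ⬝ᵥ b := by
    rw [hu, add_dotProduct]
  -- nonnegativity of the quadratic form
  have hnn : 0 ≤ v ⬝ᵥ S.mulVec v := by
    have : v ⬝ᵥ S.mulVec v = (X.mulVec (C.mulVec v)) ⬝ᵥ (X.mulVec (C.mulVec v)) := by
      rw [hS]
      rw [show C * Xᵀ * X * C = (X * C)ᵀ * (X * C) by
        simp [Matrix.transpose_mul, hCsymm, Matrix.mul_assoc]]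
      rw [← Matrix.mulVec_mulVec, Matrix.dotProduct_mulVec, ← Matrix.mulVec_transpose,
        Matrix.transpose_transpose, ← Matrix.mulVec_mulVec]
    rw [this]
    exact Finset.sum_nonneg fun i _ => mul_self_nonneg _
  rw [hexp, hub]
  nlinarith [hnn]
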